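/- (Kwapień–Pełczyński main triangle projection bound) For every n and every matrix (a_{ij}) ∈ ℂ^{n×n}: sup_{‖x‖_∞≤1, ‖y‖_∞≤1} |Σ_{i≤j} a_{ij} y_i x_j| ≤ log₂(2n) · sup_{‖x‖_∞≤1, ‖y‖_∞≤1} |Σ_{i,j=1}^n a_{ij} y_i x_j|. -/

import Mathlib

open Finset

/-- Key induction: comparisons of `K`-bit indices cost at most `K * S`. -/
lemma kp_key (n : ℕ) (a : Fin n → Fin n → ℂ) (S : ℝ)
    (hS : ∀ u v : Fin n → ℂ, (∀ i, ‖u i‖ ≤ 1) → (∀ i, ‖v i‖ ≤ 1) →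
      ‖∑ i : Fin n, ∑ j : Fin n, a i j * v i * u j‖ ≤ S) :
    ∀ (K : ℕ) (φ ψ : Fin n → ℕ), (∀ i, φ i < 2 ^ K) → (∀ j, ψ j < 2 ^ K) →
      ∀ x y : Fin n → ℂ, (∀ i, ‖x i‖ ≤ 1) → (∀ i, ‖y i‖ ≤ 1) →
      ‖∑ i : Fin n, ∑ j : Fin n, (if φ i < ψ j then a i j else 0) * y i * x j‖
        ≤ (K : ℝ) * S := by
  intro K
  induction K with
  | zero =>
    intro φ ψ hφ hψ x y hx hy
    have h0 : ∀ i j : Fin n, (if φ i < ψ j then a i j else 0) * y i * x j = 0 := by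
      intro i j
      have h1 := hφ i
      have h2 := hψ j
      simp only [pow_zero] at h1 h2
      have : ¬ (φ i < ψ j) := by omega
      simp [this]
    have hz : (∑ i : Fin n, ∑ j : Fin n, (if φ i < ψ j then a i j else 0) * y i * x j) = 0 := by
      simp only [h0]; simp
    rw [hz]
    simp
  | succ K IH =>
    intro φ ψ hφ hψ x y hx hy
    set M := 2 ^ K with hMdef
    have hMpos : 0 < M := Nat.pow_pos (by norm_num)
    set b : Fin n → ℕ := fun i => φ i / M with hbdef
    set c : Fin n → ℕ := fun j => ψ j / M with hcdef
    set φ' : Fin n → ℕ := fun i => φ i % M with hφ'def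
    set ψ' : Fin n → ℕ := fun j => ψ j % M with hψ'def
    have hb : ∀ i, b i = 0 ∨ b i = 1 := by
      intro i
      have h1 : φ i < 2 * M := by
        have := hφ i; rw [pow_succ] at this; omega
      have h2 : b i < 2 := (Nat.div_lt_iff_lt_mul hMpos).mpr (by omega)
      omega
    have hc : ∀ j, c j = 0 ∨ c j = 1 := by
      intro j
      have h1 : ψ j < 2 * M := by
        have := hψ j; rw [pow_succ] at this; omega
      have h2 : c j < 2 := (Nat.div_lt_iff_lt_mul hMpos).mpr (by omega)
      omega
    have hiff : ∀ i j, (φ i < ψ j ↔ ((b i = 0 ∧ c j = 1) ∨ (b i = c j ∧ φ' i < ψ' j))) := by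
      intro i j
      have e1 : M * b i + φ' i = φ i := Nat.div_add_mod (φ i) M
      have e2 : M * c j + ψ' j = ψ j := Nat.div_add_mod (ψ j) M
      have l1 : φ' i < M := Nat.mod_lt _ hMpos
      have l2 : ψ' j < M := Nat.mod_lt _ hMpos
      rcases hb i with h | h <;> rcases hc j with h' | h' <;>
        rw [h] at e1 ⊢ <;> rw [h'] at e2 ⊢ <;> simp only [Nat.mul_zero, Nat.mul_one] at e1 e2 <;>
        omega
    have hpoint : ∀ i j,
        (if φ i < ψ j then a i j else 0) * y i * x j
          = a i j * (if b i = 0 then y i else 0) * (if c j = 1 then x j else 0)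
            + (2⁻¹ : ℂ) *
              ((if φ' i < ψ' j then a i j else 0) * ((1:ℂ)^(b i) * y i) * ((1:ℂ)^(c j) * x j)
                + (if φ' i < ψ' j then a i j else 0) * ((-1:ℂ)^(b i) * y i) * ((-1:ℂ)^(c j) * x j)) := by
      intro i j
      rw [if_congr (hiff i j) rfl rfl]
      rcases hb i with h | h <;> rcases hc j with h' | h' <;>
        by_cases h3 : φ' i < ψ' j <;>
        simp [h, h', h3] <;> ring
    have expand :
        (∑ i : Fin n, ∑ j : Fin n, (if φ i < ψ j then a i j else 0) * y i * x j)
          = (∑ i : Fin n, ∑ j : Fin n,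
              a i j * (if b i = 0 then y i else 0) * (if c j = 1 then x j else 0))
            + (2⁻¹ : ℂ) *
              ((∑ i : Fin n, ∑ j : Fin n,
                  (if φ' i < ψ' j then a i j else 0) * ((1:ℂ)^(b i) * y i) * ((1:ℂ)^(c j) * x j))
                + (∑ i : Fin n, ∑ j : Fin n,
                  (if φ' i < ψ' j then a i j else 0) * ((-1:ℂ)^(b i) * y i) * ((-1:ℂ)^(c j) * x j))) := by
      simp only [hpoint, Finset.sum_add_distrib, ← Finset.mul_sum]
    rw [expand]
    have hA : ‖∑ i : Fin n, ∑ j : Fin n,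
        a i j * (if b i = 0 then y i else 0) * (if c j = 1 then x j else 0)‖ ≤ S := by
      apply hS
      · intro j; by_cases h : c j = 1
        · rw [if_pos h]; exact hx j
        · rw [if_neg h]; simp
      · intro i; by_cases h : b i = 0
        · rw [if_pos h]; exact hy i
        · rw [if_neg h]; simp
    have hB : ‖∑ i : Fin n, ∑ j : Fin n,
        (if φ' i < ψ' j then a i j else 0) * ((1:ℂ)^(b i) * y i) * ((1:ℂ)^(c j) * x j)‖
          ≤ (K : ℝ) * S := by
      apply IH φ' ψ' (fun i => Nat.mod_lt _ hMpos) (fun j => Nat.mod_lt _ hMpos)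
      · intro j; rw [norm_mul, norm_pow, norm_one, one_pow, one_mul]; exact hx j
      · intro i; rw [norm_mul, norm_pow, norm_one, one_pow, one_mul]; exact hy i
    have hC : ‖∑ i : Fin n, ∑ j : Fin n,
        (if φ' i < ψ' j then a i j else 0) * ((-1:ℂ)^(b i) * y i) * ((-1:ℂ)^(c j) * x j)‖
          ≤ (K : ℝ) * S := by
      apply IH φ' ψ' (fun i => Nat.mod_lt _ hMpos) (fun j => Nat.mod_lt _ hMpos)
      · intro j; rw [norm_mul, norm_pow, norm_neg, norm_one, one_pow, one_mul]; exact hx j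
      · intro i; rw [norm_mul, norm_pow, norm_neg, norm_one, one_pow, one_mul]; exact hy i
    set X := ∑ i : Fin n, ∑ j : Fin n,
        a i j * (if b i = 0 then y i else 0) * (if c j = 1 then x j else 0) with hXdef
    set Y := ∑ i : Fin n, ∑ j : Fin n,
        (if φ' i < ψ' j then a i j else 0) * ((1:ℂ)^(b i) * y i) * ((1:ℂ)^(c j) * x j) with hYdef
    set Z := ∑ i : Fin n, ∑ j : Fin n,
        (if φ' i < ψ' j then a i j else 0) * ((-1:ℂ)^(b i) * y i) * ((-1:ℂ)^(c j) * x j) with hZdef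
    have h2 : ‖(2⁻¹ : ℂ) * (Y + Z)‖ ≤ 2⁻¹ * (‖Y‖ + ‖Z‖) := by
      rw [norm_mul]
      have hh : ‖(2⁻¹ : ℂ)‖ = 2⁻¹ := by simp
      rw [hh]
      exact mul_le_mul_of_nonneg_left (norm_add_le _ _) (by norm_num)
    calc ‖X + (2⁻¹ : ℂ) * (Y + Z)‖ ≤ ‖X‖ + ‖(2⁻¹ : ℂ) * (Y + Z)‖ := norm_add_le _ _
      _ ≤ ‖X‖ + 2⁻¹ * (‖Y‖ + ‖Z‖) := by linarith
      _ ≤ ((K + 1 : ℕ) : ℝ) * S := by push_cast; linarith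

/-- Kwapień–Pełczyński main triangle projection bound on `ℓ_∞ⁿ`:
`sup_{‖x‖_∞,‖y‖_∞≤1} |Σ_{i≤j} a_{ij} y_i x_j| ≤ log₂(2n) · sup_{‖x‖_∞,‖y‖_∞≤1} |Σ_{i,j} a_{ij} y_i x_j|`. -/
theorem main_triangle_projection_linfty (n : ℕ) (a : Fin n → Fin n → ℂ)
    (x y : Fin n → ℂ) (hx : ∀ i, ‖x i‖ ≤ 1) (hy : ∀ i, ‖y i‖ ≤ 1) :
    ‖∑ i : Fin n, ∑ j : Fin n, (if i ≤ j then a i j else 0) * y i * x j‖ ≤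
      Real.logb 2 (2 * n) *
        ⨆ p : {p : (Fin n → ℂ) × (Fin n → ℂ) //
            (∀ i, ‖p.1 i‖ ≤ 1) ∧ (∀ i, ‖p.2 i‖ ≤ 1)},
          ‖∑ i : Fin n, ∑ j : Fin n, a i j * p.1.2 i * p.1.1 j‖ := by
  rcases Nat.eq_zero_or_pos n with hn | hn
  · subst hn
    simp [Real.logb]
  set S := ⨆ p : {p : (Fin n → ℂ) × (Fin n → ℂ) //
      (∀ i, ‖p.1 i‖ ≤ 1) ∧ (∀ i, ‖p.2 i‖ ≤ 1)},
    ‖∑ i : Fin n, ∑ j : Fin n, a i j * p.1.2 i * p.1.1 j‖ with hSdef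
  have hbdd : BddAbove (Set.range fun p : {p : (Fin n → ℂ) × (Fin n → ℂ) //
      (∀ i, ‖p.1 i‖ ≤ 1) ∧ (∀ i, ‖p.2 i‖ ≤ 1)} =>
      ‖∑ i : Fin n, ∑ j : Fin n, a i j * p.1.2 i * p.1.1 j‖) := by
    refine ⟨∑ i : Fin n, ∑ j : Fin n, ‖a i j‖, ?_⟩
    rintro _ ⟨⟨⟨u, v⟩, hu, hv⟩, rfl⟩
    calc ‖∑ i : Fin n, ∑ j : Fin n, a i j * v i * u j‖
        ≤ ∑ i : Fin n, ‖∑ j : Fin n, a i j * v i * u j‖ := norm_sum_le _ _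
      _ ≤ ∑ i : Fin n, ∑ j : Fin n, ‖a i j * v i * u j‖ := by
          gcongr with i _; exact norm_sum_le _ _
      _ ≤ ∑ i : Fin n, ∑ j : Fin n, ‖a i j‖ := by
          gcongr with i _ j _
          rw [norm_mul, norm_mul]
          calc ‖a i j‖ * ‖v i‖ * ‖u j‖ ≤ ‖a i j‖ * 1 * 1 := by
                gcongr
                · exact hv i
                · exact hu j
            _ = ‖a i j‖ := by ring
  have hS : ∀ u v : Fin n → ℂ, (∀ i, ‖u i‖ ≤ 1) → (∀ i, ‖v i‖ ≤ 1) →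
      ‖∑ i : Fin n, ∑ j : Fin n, a i j * v i * u j‖ ≤ S :=
    fun u v hu hv => le_ciSup hbdd ⟨(u, v), hu, hv⟩
  have hS0 : 0 ≤ S := le_trans (norm_nonneg _) (hS 0 0 (by simp) (by simp))
  set K := Nat.clog 2 (n + 1) with hKdef
  have hK1 : n + 1 ≤ 2 ^ K := Nat.le_pow_clog one_lt_two _
  have hK0 : 0 < K := Nat.clog_pos one_lt_two (by omega)
  have hK2 : 2 ^ K ≤ 2 * n := by
    have hpred : 2 ^ (K - 1) < n + 1 :=
      Nat.pow_pred_clog_lt_self one_lt_two (by omega)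
    have hsplit : 2 ^ K = 2 * 2 ^ (K - 1) := by
      conv_lhs => rw [show K = (K - 1) + 1 by omega]
      rw [pow_succ]; ring
    omega
  have key := kp_key n a S hS K (fun i => (i : ℕ)) (fun j => (j : ℕ) + 1)
    (fun i => by show (i : ℕ) < 2 ^ K; have := i.isLt; omega)
    (fun j => by show (j : ℕ) + 1 < 2 ^ K; have := j.isLt; omega)
    x y hx hy
  have heq : (∑ i : Fin n, ∑ j : Fin n, (if i ≤ j then a i j else 0) * y i * x j)
      = ∑ i : Fin n, ∑ j : Fin n,
          (if (i : ℕ) < (j : ℕ) + 1 then a i j else 0) * y i * x j := by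
    refine Finset.sum_congr rfl fun i _ => Finset.sum_congr rfl fun j _ => ?_
    congr 2
    exact if_congr (by rw [Fin.le_def]; omega) rfl rfl
  rw [heq]
  refine key.trans ?_
  have hlog : (K : ℝ) ≤ Real.logb 2 (2 * n) := by
    have h2 : (2 : ℝ) ^ K ≤ 2 * n := by exact_mod_cast hK2
    have h3 : Real.logb 2 ((2 : ℝ) ^ K) = K := by
      rw [Real.logb_pow, Real.logb_self_eq_one one_lt_two]
      ring
    rw [← h3]
    exact (Real.logb_le_logb one_lt_two (by positivity) (by positivity)).mpr h2
  exact mul_le_mul_of_nonneg_right hlog hS0
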